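/- Let n be an odd prime and let a, b be odd positive integers. If |∑_{i=0}^{(n−1)/2} C(n, 2i+1) · (3a²)^{(n−1)/2−i} · (−2)^i| = |∑_{i=0}^{(n−1)/2} C(n, 2i+1) · (3b²)^{(n−1)/2−i} · (−2)^i|, then a = b. -/

import Mathlib

open Finset

/-- Each sum is congruent to `(-2)^m` mod 3 (all other terms carry a factor `3`). -/
private lemma aux_mod3 (n m : ℕ) (x : ℤ) :
    (3 : ℤ) ∣ (∑ i ∈ Finset.range (m + 1),
        (n.choose (2 * i + 1) : ℤ) * (3 * x) ^ (m - i) * (-2) ^ i)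
      - (n.choose (2 * m + 1) : ℤ) * (-2) ^ m := by
  rw [Finset.sum_range_succ]
  have h1 : (n.choose (2 * m + 1) : ℤ) * (3 * x) ^ (m - m) * (-2) ^ m
      = (n.choose (2 * m + 1) : ℤ) * (-2) ^ m := by
    simp
  rw [h1, add_sub_cancel_right]
  refine Finset.dvd_sum ?_
  intro i hi
  have hi' : i < m := Finset.mem_range.mp hi
  have h2 : m - i = (m - i - 1) + 1 := by omega
  rw [h2, pow_succ]
  exact ⟨(n.choose (2 * i + 1) : ℤ) * ((3 * x) ^ (m - i - 1)) * x * (-2) ^ i, by ring⟩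

theorem stmt_12 (n a b : ℕ) (hn : n.Prime) (hnodd : Odd n)
    (ha : 0 < a) (hb : 0 < b) (haodd : Odd a) (hbodd : Odd b)
    (h : |∑ i ∈ Finset.range ((n - 1) / 2 + 1),
        (n.choose (2 * i + 1) : ℤ) * (3 * (a : ℤ) ^ 2) ^ ((n - 1) / 2 - i) * (-2) ^ i| =
      |∑ i ∈ Finset.range ((n - 1) / 2 + 1),
        (n.choose (2 * i + 1) : ℤ) * (3 * (b : ℤ) ^ 2) ^ ((n - 1) / 2 - i) * (-2) ^ i|) :
    a = b := by
  obtain ⟨m, hm⟩ := hnodd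
  have hm1 : 1 ≤ m := by have := hn.two_le; omega
  have hmdef : (n - 1) / 2 = m := by omega
  rw [hmdef] at h
  set Sa : ℤ := ∑ i ∈ Finset.range (m + 1),
      (n.choose (2 * i + 1) : ℤ) * (3 * (a : ℤ) ^ 2) ^ (m - i) * (-2) ^ i with hSa
  set Sb : ℤ := ∑ i ∈ Finset.range (m + 1),
      (n.choose (2 * i + 1) : ℤ) * (3 * (b : ℤ) ^ 2) ^ (m - i) * (-2) ^ i with hSb
  have hchoose_top : (n.choose (2 * m + 1) : ℤ) = 1 := by
    rw [hm, Nat.choose_self]; norm_num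
  have hda : (3 : ℤ) ∣ Sa - (-2) ^ m := by
    have := aux_mod3 n m ((a : ℤ) ^ 2)
    rwa [hchoose_top, one_mul] at this
  have hdb : (3 : ℤ) ∣ Sb - (-2) ^ m := by
    have := aux_mod3 n m ((b : ℤ) ^ 2)
    rwa [hchoose_top, one_mul] at this
  -- Step 1: drop the absolute values
  have hSeq : Sa = Sb := by
    rcases abs_eq_abs.mp h with h1 | h1
    · exact h1
    · exfalso
      have h3 : (3 : ℤ) ∣ 2 * (-2) ^ m := by
        have heq : (2 : ℤ) * (-2) ^ m = -((Sa - (-2) ^ m) + (Sb - (-2) ^ m)) := by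
          rw [h1]; ring
        rw [heq]
        exact dvd_neg.mpr (dvd_add hda hdb)
      rcases (Int.prime_three.dvd_mul.mp h3) with h4 | h4
      · norm_num at h4
      · have := Int.prime_three.dvd_of_dvd_pow h4
        norm_num at this
  -- Step 2: 2-adic valuation argument
  by_contra hab
  set t : ℤ := (a : ℤ) ^ 2 with ht
  set s : ℤ := (b : ℤ) ^ 2 with hs
  have hts : t ≠ s := by
    intro hts
    apply hab
    have hab' : (a : ℤ) = (b : ℤ) := by
      have ha' : (0 : ℤ) ≤ (a : ℤ) := Int.natCast_nonneg a
      have hb' : (0 : ℤ) ≤ (b : ℤ) := Int.natCast_nonneg b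
      rw [ht, hs] at hts
      nlinarith [hts]
    exact_mod_cast hab'
  have htodd : ¬ (2 : ℤ) ∣ t := by
    have hodda : Odd ((a : ℤ)) := by exact_mod_cast haodd
    have hoddt : Odd t := by rw [ht]; exact hodda.pow
    intro hdvd
    exact (Int.not_odd_iff_even.mpr (even_iff_two_dvd.mpr hdvd)) hoddt
  have h4ts : (4 : ℤ) ∣ t - s := by
    obtain ⟨k, hk⟩ := haodd
    obtain ⟨l, hl⟩ := hbodd
    have hka : ((a : ℤ)) = 2 * (k : ℤ) + 1 := by exact_mod_cast hk
    have hlb : ((b : ℤ)) = 2 * (l : ℤ) + 1 := by exact_mod_cast hl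
    refine ⟨(k : ℤ) ^ 2 + k - (l : ℤ) ^ 2 - l, ?_⟩
    rw [ht, hs, hka, hlb]; ring
  have Fts : FiniteMultiplicity (2 : ℤ) (t - s) :=
    Int.finiteMultiplicity_iff.mpr ⟨by norm_num, sub_ne_zero.mpr hts⟩
  have Fm : FiniteMultiplicity (2 : ℤ) (m : ℤ) :=
    Int.finiteMultiplicity_iff.mpr ⟨by norm_num, by exact_mod_cast (by omega : m ≠ 0)⟩
  set v := multiplicity (2 : ℤ) (t - s) with hvdef
  set μ := multiplicity (2 : ℤ) (m : ℤ) with hμdef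
  have hv : emultiplicity (2 : ℤ) (t - s) = v := Fts.emultiplicity_eq_multiplicity
  have hμ : emultiplicity (2 : ℤ) (m : ℤ) = μ := Fm.emultiplicity_eq_multiplicity
  -- rewrite the vanishing difference termwise
  have hD : ∑ i ∈ Finset.range (m + 1),
      (n.choose (2 * i + 1) : ℤ) * 3 ^ (m - i) * (-2) ^ i * (t ^ (m - i) - s ^ (m - i)) = 0 := by
    have h1 : ∀ i ∈ Finset.range (m + 1),
        (n.choose (2 * i + 1) : ℤ) * 3 ^ (m - i) * (-2) ^ i * (t ^ (m - i) - s ^ (m - i))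
          = ((n.choose (2 * i + 1) : ℤ) * (3 * t) ^ (m - i) * (-2) ^ i)
            - ((n.choose (2 * i + 1) : ℤ) * (3 * s) ^ (m - i) * (-2) ^ i) := by
      intro i _
      rw [mul_pow, mul_pow]; ring
    rw [Finset.sum_congr rfl h1, Finset.sum_sub_distrib, ← hSa, ← hSb, hSeq, sub_self]
  -- middle terms are divisible by 2^(v+μ+1)
  have hmid : ∀ i, 1 ≤ i → i ≤ m →
      (2 : ℤ) ^ (v + μ + 1) ∣
        (n.choose (2 * i + 1) : ℤ) * 3 ^ (m - i) * (-2) ^ i * (t ^ (m - i) - s ^ (m - i)) := by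
    intro i hi1 him
    rcases eq_or_lt_of_le him with rfl | hilt
    · simp
    set j := m - i with hj
    have hj1 : 1 ≤ j := by omega
    -- binomial identities
    have key1 : n * Nat.choose (2 * m) (2 * i) = Nat.choose n (2 * i + 1) * (2 * i + 1) := by
      have hkey := Nat.add_one_mul_choose_eq (2 * m) (2 * i)
      simpa [hm, Nat.succ_eq_add_one] using hkey
    have key2 : 2 * m * Nat.choose (2 * m - 1) (2 * j - 1)
        = Nat.choose (2 * m) (2 * j) * (2 * j) := by
      have hkey := Nat.add_one_mul_choose_eq (2 * m - 1) (2 * j - 1)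
      have e1 : 2 * m - 1 + 1 = 2 * m := by omega
      have e2 : 2 * j - 1 + 1 = 2 * j := by omega
      simpa [Nat.succ_eq_add_one, e1, e2] using hkey
    have key2' : m * Nat.choose (2 * m - 1) (2 * j - 1) = Nat.choose (2 * m) (2 * j) * j := by
      have h2 : 2 * (m * Nat.choose (2 * m - 1) (2 * j - 1))
          = 2 * (Nat.choose (2 * m) (2 * j) * j) := by
        rw [← mul_assoc, key2]; ring
      exact Nat.eq_of_mul_eq_mul_left (by norm_num) h2
    have hsymm : Nat.choose (2 * m) (2 * j) = Nat.choose (2 * m) (2 * i) := by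
      have h2i : 2 * i ≤ 2 * m := by omega
      have := Nat.choose_symm h2i
      rw [← this]
      congr 1
      omega
    -- 2^μ divides m (in ℕ)
    have hμm : 2 ^ μ ∣ m := by
      have hdz : (2 : ℤ) ^ μ ∣ (m : ℤ) := pow_multiplicity_dvd (2 : ℤ) (m : ℤ)
      have : ((2 ^ μ : ℕ) : ℤ) ∣ (m : ℤ) := by push_cast; exact hdz
      exact_mod_cast this
    have hdvd1 : 2 ^ μ ∣ Nat.choose (2 * m) (2 * j) * j := by
      rw [← key2']
      exact (hμm.mul_right _)
    have hdvd2 : 2 ^ μ ∣ Nat.choose n (2 * i + 1) * j * (2 * i + 1) := by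
      have : Nat.choose n (2 * i + 1) * j * (2 * i + 1)
          = n * (Nat.choose (2 * m) (2 * j) * j) := by
        rw [hsymm, ← mul_assoc, key1]; ring
      rw [this]
      exact hdvd1.mul_left n
    have hcop : Nat.Coprime (2 ^ μ) (2 * i + 1) :=
      Nat.Coprime.pow_left μ (Nat.prime_two.coprime_iff_not_dvd.mpr (by omega))
    have hdvd3 : 2 ^ μ ∣ Nat.choose n (2 * i + 1) * j := hcop.dvd_of_dvd_mul_right hdvd2
    -- factor the 2-part out of j
    obtain ⟨e, w, hw, hjw⟩ := Nat.exists_eq_pow_mul_and_not_dvd (by omega : j ≠ 0) 2 (by norm_num)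
    have hcopw : Nat.Coprime (2 ^ μ) w :=
      Nat.Coprime.pow_left μ (Nat.prime_two.coprime_iff_not_dvd.mpr hw)
    have hdvd4 : 2 ^ μ ∣ Nat.choose n (2 * i + 1) * 2 ^ e := by
      apply hcopw.dvd_of_dvd_mul_right
      have : Nat.choose n (2 * i + 1) * 2 ^ e * w = Nat.choose n (2 * i + 1) * j := by
        rw [hjw]; ring
      rwa [this]
    obtain ⟨c, hc⟩ := hdvd4
    have hcZ : ((Nat.choose n (2 * i + 1) : ℤ)) * 2 ^ e = 2 ^ μ * (c : ℤ) := by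
      exact_mod_cast hc
    -- emultiplicity of j
    have hej : emultiplicity (2 : ℤ) ((j : ℕ) : ℤ) = (e : ℕ∞) := by
      have hjZ : ((j : ℕ) : ℤ) = (2 : ℤ) ^ e * (w : ℤ) := by exact_mod_cast hjw
      rw [hjZ, emultiplicity_mul Int.prime_two,
        emultiplicity_pow_self_of_prime Int.prime_two,
        emultiplicity_eq_zero.mpr (by exact_mod_cast hw : ¬ (2 : ℤ) ∣ (w : ℤ)), add_zero]
    -- LTE
    have hLTE : emultiplicity (2 : ℤ) (t ^ j - s ^ j) = ((v + e : ℕ) : ℕ∞) := by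
      rw [Int.two_pow_sub_pow' j h4ts htodd, hv, hej]
      norm_cast
    have hpow : (2 : ℤ) ^ (v + e) ∣ t ^ j - s ^ j :=
      pow_dvd_of_le_emultiplicity (le_of_eq hLTE.symm)
    obtain ⟨u, hu⟩ := hpow
    -- assemble
    have hiexp : (-2 : ℤ) ^ i = -2 * (-2 : ℤ) ^ (i - 1) := by
      conv_lhs => rw [show i = (i - 1) + 1 by omega]
      rw [pow_succ]; ring
    refine ⟨(c : ℤ) * 3 ^ j * (-(-2 : ℤ) ^ (i - 1)) * u, ?_⟩
    rw [hu, hiexp]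
    linear_combination ((3 : ℤ) ^ j * (-2) * (-2 : ℤ) ^ (i - 1) * u * 2 ^ v) * hcZ
  -- split off the i = 0 term
  rw [Finset.sum_range_succ'] at hD
  have hR : (2 : ℤ) ^ (v + μ + 1) ∣ ∑ i ∈ Finset.range m,
      (n.choose (2 * (i + 1) + 1) : ℤ) * 3 ^ (m - (i + 1)) * (-2) ^ (i + 1)
        * (t ^ (m - (i + 1)) - s ^ (m - (i + 1))) := by
    refine Finset.dvd_sum ?_
    intro i hi
    exact hmid (i + 1) (by omega) (by have := Finset.mem_range.mp hi; omega)
  have hg0 : (2 : ℤ) ^ (v + μ + 1) ∣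
      (n.choose (2 * 0 + 1) : ℤ) * 3 ^ (m - 0) * (-2) ^ 0 * (t ^ (m - 0) - s ^ (m - 0)) := by
    have : (n.choose (2 * 0 + 1) : ℤ) * 3 ^ (m - 0) * (-2) ^ 0 * (t ^ (m - 0) - s ^ (m - 0))
        = -(∑ i ∈ Finset.range m,
          (n.choose (2 * (i + 1) + 1) : ℤ) * 3 ^ (m - (i + 1)) * (-2) ^ (i + 1)
            * (t ^ (m - (i + 1)) - s ^ (m - (i + 1)))) := by
      linarith [hD]
    rw [this]
    exact hR.neg_right
  -- but its 2-adic valuation is exactly v + μ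
  have hg0' : (2 : ℤ) ^ (v + μ + 1) ∣ ((n : ℤ) * 3 ^ m) * (t ^ m - s ^ m) := by
    have heq : (n.choose (2 * 0 + 1) : ℤ) * 3 ^ (m - 0) * (-2) ^ 0 * (t ^ (m - 0) - s ^ (m - 0))
        = ((n : ℤ) * 3 ^ m) * (t ^ m - s ^ m) := by
      simp [Nat.choose_one_right]
    rwa [heq] at hg0
  have hval : emultiplicity (2 : ℤ) (((n : ℤ) * 3 ^ m) * (t ^ m - s ^ m)) = ((v + μ : ℕ) : ℕ∞) := by
    rw [emultiplicity_mul Int.prime_two]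
    have h1 : emultiplicity (2 : ℤ) ((n : ℤ) * 3 ^ m) = 0 := by
      apply emultiplicity_eq_zero.mpr
      intro hdvd
      rcases Int.prime_two.dvd_mul.mp hdvd with h2 | h2
      · have : (2 : ℕ) ∣ n := by exact_mod_cast h2
        omega
      · have := Int.prime_two.dvd_of_dvd_pow h2
        norm_num at this
    have h2 : emultiplicity (2 : ℤ) (t ^ m - s ^ m) = ((v + μ : ℕ) : ℕ∞) := by
      rw [Int.two_pow_sub_pow' m h4ts htodd, hv, hμ]
      norm_cast
    rw [h1, h2, zero_add]
  have hle : ((v + μ + 1 : ℕ) : ℕ∞) ≤ ((v + μ : ℕ) : ℕ∞) := by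
    have := pow_dvd_iff_le_emultiplicity.mp hg0'
    rwa [hval] at this
  have : v + μ + 1 ≤ v + μ := by exact_mod_cast hle
  omega
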